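/- Let h ∈ ℝ and let α : U → ℝ be smooth, and define X₀(u) = −α(u)(H(u)−h)[∇C(u) × (∇H(u) × ∇C(u))]. Then for every u ∈ U one has ⟨X(u) + X₀(u), ∇H(u)⟩ = −α(u)(H(u)−h)·‖∇H(u) × ∇C(u)‖². Consequently, along any differentiable solution u(t) of du/dt = X(u) + X₀(u), the function t ↦ H(u(t)) − h satisfies (d/dt)(H(u(t)) − h) = −α(u(t))‖∇H(u(t)) × ∇C(u(t))‖² · (H(u(t)) − h). -/

import Mathlib

open scoped RealInnerProductSpace

noncomputable section

abbrev E3 := EuclideanSpace ℝ (Fin 3)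

/-- The cross product on `EuclideanSpace ℝ (Fin 3)`. -/
noncomputable def cross3 (a b : E3) : E3 :=
  (WithLp.equiv 2 (Fin 3 → ℝ)).symm
    (crossProduct (WithLp.equiv 2 (Fin 3 → ℝ) a) (WithLp.equiv 2 (Fin 3 → ℝ) b))

lemma cross3_inner_left_self (a b : E3) : ⟪cross3 a b, a⟫ = 0 := by
  simp [cross3, cross_apply, PiLp.inner_apply, Fin.sum_univ_three]
  ring

lemma cross3_triple (a c : E3) : ⟪cross3 c (cross3 a c), a⟫ = ‖cross3 a c‖ ^ 2 := by
  rw [← real_inner_self_eq_norm_sq]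
  simp [cross3, cross_apply, PiLp.inner_apply, Fin.sum_univ_three,
    EuclideanSpace.norm_sq_eq]
  ring

/-- For `X₀(u) = −α(u)(H(u)−h)[∇C(u) × (∇H(u) × ∇C(u))]` we have
`⟨X(u) + X₀(u), ∇H(u)⟩ = −α(u)(H(u)−h)‖∇H(u) × ∇C(u)‖²` on `U`; consequently, along
any differentiable solution `u(t)` of `du/dt = X(u) + X₀(u)`, the function
`t ↦ H(u(t)) − h` satisfies
`(d/dt)(H(u(t)) − h) = −α(u(t))‖∇H(u(t)) × ∇C(u(t))‖² · (H(u(t)) − h)`. -/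
theorem stmt_4 (U : Set E3) (hU : IsOpen U) (ν H C : E3 → ℝ)
    (hν : ContDiffOn ℝ (⊤ : ℕ∞) ν U) (hH : ContDiffOn ℝ (⊤ : ℕ∞) H U)
    (hC : ContDiffOn ℝ (⊤ : ℕ∞) C U)
    (X : E3 → E3) (hX : ∀ u, X u = ν u • cross3 (gradient H u) (gradient C u))
    (h : ℝ) (α : E3 → ℝ) (hα : ContDiffOn ℝ (⊤ : ℕ∞) α U)
    (X₀ : E3 → E3)
    (hX₀ : ∀ u, X₀ u =
      -(α u * (H u - h)) • cross3 (gradient C u) (cross3 (gradient H u) (gradient C u))) :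
    (∀ u ∈ U, ⟪X u + X₀ u, gradient H u⟫ =
      -(α u * (H u - h)) * ‖cross3 (gradient H u) (gradient C u)‖ ^ 2) ∧
    (∀ γ : ℝ → E3, (∀ t, γ t ∈ U) →
      (∀ t, HasDerivAt γ (X (γ t) + X₀ (γ t)) t) →
      ∀ t, HasDerivAt (fun s => H (γ s) - h)
        (-(α (γ t)) * ‖cross3 (gradient H (γ t)) (gradient C (γ t))‖ ^ 2 * (H (γ t) - h)) t) := by
  have key : ∀ u : E3, ⟪X u + X₀ u, gradient H u⟫ =
      -(α u * (H u - h)) * ‖cross3 (gradient H u) (gradient C u)‖ ^ 2 := by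
    intro u
    rw [hX u, hX₀ u, inner_add_left, real_inner_smul_left, real_inner_smul_left,
      cross3_inner_left_self, cross3_triple]
    ring
  refine ⟨fun u _ => key u, fun γ hγ hγ' t => ?_⟩
  have hgrad : HasGradientAt H (gradient H (γ t)) (γ t) :=
    (hH.differentiableOn (by simp)).hasGradientAt (hU.mem_nhds (hγ t))
  have hfd : HasFDerivAt H (InnerProductSpace.toDual ℝ E3 (gradient H (γ t))) (γ t) :=
    hgrad.hasFDerivAt
  have hcomp : HasDerivAt (fun s => H (γ s))
      (InnerProductSpace.toDual ℝ E3 (gradient H (γ t)) (X (γ t) + X₀ (γ t))) t :=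
    hfd.comp_hasDerivAt t (hγ' t)
  have : InnerProductSpace.toDual ℝ E3 (gradient H (γ t)) (X (γ t) + X₀ (γ t)) =
      -(α (γ t)) * ‖cross3 (gradient H (γ t)) (gradient C (γ t))‖ ^ 2 * (H (γ t) - h) := by
    rw [InnerProductSpace.toDual_apply_apply, real_inner_comm, key (γ t)]
    ring
  rw [this] at hcomp
  exact hcomp.sub_const h
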